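/- Let F ⊆ L be fields with F algebraically closed in L, and let θ be an element separable algebraic over F with F(θ) and L contained in a common field. Then F(θ) is algebraically closed in L(θ). -/

import Mathlib

open IntermediateField Matrix

theorem aux_trace {F L Ω : Type*} [Field F] [Field L] [Field Ω]
    [Algebra F L] [Algebra F Ω] [Algebra L Ω] [IsScalarTower F L Ω]
    {θ : Ω} (hθL : IsIntegral L θ) (hsepL : IsSeparable L θ)
    (y : L⟮θ⟯) (hy : IsIntegral F (y : Ω)) :
    IsIntegral F (Algebra.trace L L⟮θ⟯ y) := by
  haveI : FiniteDimensional L L⟮θ⟯ := adjoin.finiteDimensional hθL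
  haveI : Algebra.IsSeparable L L⟮θ⟯ :=
    (isSeparable_adjoin_simple_iff_isSeparable L Ω).2 hsepL
  have hyE : IsIntegral F y := by
    rwa [← isIntegral_algHom_iff ((L⟮θ⟯.val).restrictScalars F)
      (Subtype.val_injective : Function.Injective (L⟮θ⟯.val))]
  have htr := trace_eq_sum_embeddings (K := L) (L := L⟮θ⟯)
      (AlgebraicClosure L) (x := y)
  have hsum : IsIntegral F (∑ σ : L⟮θ⟯ →ₐ[L] AlgebraicClosure L, σ y) := by
    apply IsIntegral.sum
    intro σ _
    exact hyE.map (σ.restrictScalars F)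
  rw [← htr] at hsum
  exact (isIntegral_algHom_iff (IsScalarTower.toAlgHom F L (AlgebraicClosure L))
    (algebraMap L (AlgebraicClosure L)).injective).mp hsum

theorem aux_main {F L Ω : Type*} [Field F] [Field L] [Field Ω]
    [Algebra F L] [Algebra F Ω] [Algebra L Ω] [IsScalarTower F L Ω]
    (hcl : ∀ l : L, IsIntegral F l → l ∈ (algebraMap F L).range)
    {θ : Ω} (hθ : IsIntegral F θ) (hθsep : IsSeparable F θ)
    {x : Ω} (hx : x ∈ L⟮θ⟯) (hxint : IsIntegral F x) :
    ∃ (n : ℕ) (f : Fin n → F), x = ∑ i : Fin n, algebraMap F Ω (f i) * θ ^ (i : ℕ) := by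
  have hθL : IsIntegral L θ := hθ.tower_top
  have hsepL : IsSeparable L θ := IsSeparable.tower_top L hθsep
  haveI : FiniteDimensional L L⟮θ⟯ := adjoin.finiteDimensional hθL
  haveI : Algebra.IsSeparable L L⟮θ⟯ :=
    (isSeparable_adjoin_simple_iff_isSeparable L Ω).2 hsepL
  set pb := adjoin.powerBasis hθL with hpb
  set x' : L⟮θ⟯ := ⟨x, hx⟩ with hx'
  set c : Fin pb.dim → L := pb.basis.equivFun x' with hc
  -- the coe of basis elements
  have hbasis : ∀ i : Fin pb.dim, ((pb.basis i : L⟮θ⟯) : Ω) = θ ^ (i : ℕ) := by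
    intro i
    have hgen : (pb.gen : Ω) = θ := AdjoinSimple.coe_gen L θ
    rw [pb.basis_eq_pow]
    push_cast
    rw [hgen]
  -- entries integral over F
  have hint : ∀ y : L⟮θ⟯, IsIntegral F (y : Ω) →
      Algebra.trace L L⟮θ⟯ y ∈ (algebraMap F L).range := fun y hy =>
    hcl _ (aux_trace hθL hsepL y hy)
  set T : Matrix (Fin pb.dim) (Fin pb.dim) L := Algebra.traceMatrix L pb.basis with hT
  have hTmem : ∀ i j, T i j ∈ (algebraMap F L).range := by
    intro i j
    rw [hT, Algebra.traceMatrix_apply, Algebra.traceForm_apply]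
    apply hint
    push_cast
    rw [hbasis, hbasis]
    exact (hθ.pow _).mul (hθ.pow _)
  have hvmem : ∀ i, Algebra.trace L L⟮θ⟯ (x' * pb.basis i) ∈ (algebraMap F L).range := by
    intro i
    apply hint
    push_cast
    rw [hbasis]
    exact hxint.mul (hθ.pow _)
  choose T₀ hT₀ using fun i j => hTmem i j
  choose v₀ hv₀ using hvmem
  have hTmap : T = (Matrix.of T₀).map (algebraMap F L) := by
    ext i j; exact (hT₀ i j).symm
  have hdet : T.det ≠ 0 := det_traceMatrix_ne_zero' pb
  have hdet₀ : (Matrix.of T₀).det ≠ 0 := by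
    intro h
    apply hdet
    rw [hTmap, ← RingHom.mapMatrix_apply, ← RingHom.map_det, h, map_zero]
  have h1 : T *ᵥ c = fun i => Algebra.trace L L⟮θ⟯ (x' * pb.basis i) :=
    Algebra.traceMatrix_of_basis_mulVec pb.basis x'
  -- candidate solution with entries in range
  set w : Fin pb.dim → F := (Matrix.of T₀)⁻¹ *ᵥ v₀ with hw
  have h2 : T *ᵥ (fun i => algebraMap F L (w i)) =
      fun i => Algebra.trace L L⟮θ⟯ (x' * pb.basis i) := by
    funext i
    have : (fun i => algebraMap F L (w i)) = (algebraMap F L) ∘ w := rfl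
    rw [this, hTmap, ← RingHom.map_mulVec, hw, Matrix.mulVec_mulVec,
      Matrix.mul_nonsing_inv _ (isUnit_iff_ne_zero.2 hdet₀), Matrix.one_mulVec]
    exact hv₀ i
  have hcw : c = fun i => algebraMap F L (w i) := by
    have h3 : T⁻¹ *ᵥ (T *ᵥ c) = T⁻¹ *ᵥ (T *ᵥ fun i => algebraMap F L (w i)) := by
      rw [h1, h2]
    rwa [Matrix.mulVec_mulVec, Matrix.mulVec_mulVec,
      Matrix.nonsing_inv_mul _ (isUnit_iff_ne_zero.2 hdet), Matrix.one_mulVec,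
      Matrix.one_mulVec] at h3
  refine ⟨pb.dim, w, ?_⟩
  have hsum := pb.basis.sum_equivFun x'
  have : x = ((∑ i, c i • pb.basis i : L⟮θ⟯) : Ω) := by rw [hsum]
  rw [this]
  push_cast
  refine Finset.sum_congr rfl fun i _ => ?_
  have hco : ((c i • pb.basis i : L⟮θ⟯) : Ω) = c i • (pb.basis i : Ω) := rfl
  rw [hbasis, Algebra.smul_def]
  simp only [hcw]
  rw [← IsScalarTower.algebraMap_apply]

/-- If `F ⊆ L` are subfields of `Ω`, `F` is algebraically closed in `L`, and `θ ∈ Ω` is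
separable algebraic over `F`, then `F(θ)` is algebraically closed in `L(θ)`. -/
theorem stmt_1 {Ω : Type*} [Field Ω] (F L : Subfield Ω) (hFL : F ≤ L)
    (hcl : ∀ x ∈ L, IsAlgebraic F x → x ∈ F)
    (θ : Ω) (hθalg : IsAlgebraic F θ) (hθsep : IsSeparable F θ) :
    ∀ x ∈ Subfield.closure ((L : Set Ω) ∪ {θ}),
      IsAlgebraic (Subfield.closure ((F : Set Ω) ∪ {θ})) x →
        x ∈ Subfield.closure ((F : Set Ω) ∪ {θ}) := by
  intro x hxL hxalg
  letI : Algebra ↥F ↥L := (Subfield.inclusion hFL).toAlgebra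
  haveI : IsScalarTower ↥F ↥L Ω := IsScalarTower.of_algebraMap_eq fun _ => rfl
  set Sθ := Subfield.closure ((F : Set Ω) ∪ {θ}) with hSθ
  have hθ : IsIntegral ↥F θ := hθalg.isIntegral
  -- every element of Sθ is integral over F
  have hSint : ∀ z ∈ Sθ, IsIntegral ↥F z := by
    have hle : Sθ ≤ { (integralClosure ↥F Ω).toSubring with
        inv_mem' := fun z hz => IsIntegral.inv hz } := by
      apply Subfield.closure_le.2
      rintro z (hz | rfl)
      · exact isIntegral_algebraMap (x := (⟨z, hz⟩ : ↥F))
      · exact hθ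
    exact fun z hz => hle hz
  have hFS : F ≤ Sθ := fun z hz => Subfield.subset_closure (Or.inl hz)
  -- x is integral over F
  have hxint : IsIntegral ↥F x := by
    letI : Algebra ↥F ↥Sθ := (Subfield.inclusion hFS).toAlgebra
    haveI : IsScalarTower ↥F ↥Sθ Ω := IsScalarTower.of_algebraMap_eq fun _ => rfl
    haveI : Algebra.IsIntegral ↥F ↥Sθ := ⟨fun s => by
      rw [← isIntegral_algHom_iff (IsScalarTower.toAlgHom ↥F ↥Sθ Ω)
        (Subtype.val_injective)]
      exact hSint (s : Ω) s.2⟩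
    exact isIntegral_trans x hxalg.isIntegral
  -- x lies in L⟮θ⟯
  have hrange : Set.range (algebraMap ↥L Ω) = (L : Set Ω) :=
    Set.ext fun z => ⟨fun ⟨l, hl⟩ => hl ▸ l.2, fun hz => ⟨⟨z, hz⟩, rfl⟩⟩
  have hx : x ∈ (↥L)⟮θ⟯ := by
    show x ∈ (adjoin ↥L {θ}).toSubfield
    rw [adjoin_toSubfield, hrange]
    exact hxL
  -- F is algebraically closed in L
  have hcl' : ∀ l : ↥L, IsIntegral ↥F l → l ∈ (algebraMap ↥F ↥L).range := by
    intro l hl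
    have hlΩ : IsIntegral ↥F (l : Ω) :=
      (isIntegral_algHom_iff (IsScalarTower.toAlgHom ↥F ↥L Ω)
        Subtype.val_injective).mpr hl
    have hmem : (l : Ω) ∈ F := hcl (l : Ω) l.2 hlΩ.isAlgebraic
    exact ⟨⟨(l : Ω), hmem⟩, Subtype.ext rfl⟩
  obtain ⟨n, f, hf⟩ := aux_main hcl' hθ hθsep hx hxint
  rw [hf]
  refine Sθ.sum_mem fun i _ => ?_
  exact Sθ.mul_mem (hFS (f i).2) (Sθ.pow_mem (Subfield.subset_closure (Or.inr rfl)) _)
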